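/- For any rooted tree T with n vertices and any integer k with 2 ≤ k ≤ n, there exists a set M of at most 3k−5 vertices such that every connected component of T minus M has at most n/k vertices. -/

import Mathlib

open Finset
open scoped Classical

variable {V : Type} (G : SimpleGraph V)

/-- Reachability within a finset `s` (intermediate and end vertices in `s`). -/
def TPConn (s : Finset V) : V → V → Prop :=
  Relation.ReflTransGen (fun a b => G.Adj a b ∧ a ∈ s ∧ b ∈ s)

variable {G}

lemma TPConn.symm {s : Finset V} {u v : V} (h : TPConn G s u v) : TPConn G s v u :=
  (@Relation.ReflTransGen.stdSymm _ _ ⟨fun _ _ h => ⟨h.1.symm, h.2.2, h.2.1⟩⟩).symm _ _ h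

lemma TPConn.trans {s : Finset V} {u v w : V} (h : TPConn G s u v) (h' : TPConn G s v w) :
    TPConn G s u w := Relation.ReflTransGen.trans h h'

lemma TPConn.mem_right {s : Finset V} {u v : V} (h : TPConn G s u v) (hu : u ∈ s) : v ∈ s := by
  induction h with
  | refl => exact hu
  | tail _ h ih => exact h.2.2

lemma TPConn.mono {s s' : Finset V} (hss : s ⊆ s') {u v : V} (h : TPConn G s u v) :
    TPConn G s' u v :=
  Relation.ReflTransGen.mono (p := fun a b => G.Adj a b ∧ a ∈ s' ∧ b ∈ s')
    (fun a b h => ⟨h.1, hss h.2.1, hss h.2.2⟩) _ _ h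

open scoped Classical in
/-- chain stays inside the component of `u`. -/
lemma TPConn.self_comp {s : Finset V} {u v : V} (h : TPConn G s u v) :
    TPConn G (s.filter (TPConn G s u)) u v := by
  induction h with
  | refl => exact Relation.ReflTransGen.refl
  | @tail b c hub hbc ih =>
      have hub' : TPConn G s u b := hub
      have huc : TPConn G s u c := hub'.tail hbc
      exact ih.tail ⟨hbc.1, by simp [Finset.mem_filter, hbc.2.1, hub'],
        by simp [Finset.mem_filter, hbc.2.2, huc]⟩

/-- turn a chain into a walk whose support is controlled. -/
lemma TPConn.exists_walk {s : Finset V} {u v : V} (h : TPConn G s u v) :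
    ∃ p : G.Walk u v, ∀ x ∈ p.support, x = u ∨ x ∈ s := by
  induction h with
  | refl => exact ⟨SimpleGraph.Walk.nil, by simp⟩
  | @tail b c hub hbc ih =>
      obtain ⟨p, hp⟩ := ih
      refine ⟨p.concat hbc.1, ?_⟩
      intro x hx
      rw [SimpleGraph.Walk.support_concat, List.mem_append] at hx
      rcases hx with hx | hx
      · exact hp x hx
      · simp only [List.mem_singleton] at hx
        exact Or.inr (hx ▸ hbc.2.2)

/-- In a tree, two distinct neighbors of `r` cannot be joined avoiding `r`. -/
lemma tp_unique_nbr (hT : G.IsTree) {s : Finset V} (hrs : r ∉ s) {y y' : V}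
    (hy : G.Adj r y) (hy' : G.Adj r y') (hne : y ≠ y') (h : TPConn G s y y') : False := by
  obtain ⟨p, hp⟩ := h.exists_walk
  have hrp : r ∉ p.toPath.1.support := by
    intro hr
    rcases hp r (SimpleGraph.Walk.support_toPath_subset p hr) with h1 | h1
    · exact hy.ne h1
    · exact hrs h1
  have hq : (SimpleGraph.Walk.cons hy.symm (SimpleGraph.Walk.cons hy'
      SimpleGraph.Walk.nil) : G.Walk y y').IsPath := by
    rw [SimpleGraph.Walk.isPath_def]
    simp [hy.ne', hy'.ne, hne]
  have := (hT.existsUnique_path y y').unique p.toPath.2 hq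
  rw [this] at hrp
  exact hrp (by simp)

/-- From connectivity of `S`, each vertex `u ≠ r` reaches a neighbor of `r`
inside `S.erase r`. -/
lemma tp_first_hit {S : Finset V} {r u : V} (hu : u ∈ S.erase r)
    (h : TPConn G S u r) :
    ∃ y, TPConn G (S.erase r) u y ∧ G.Adj y r := by
  have key : ∀ v, TPConn G S u v →
      (v ≠ r ∧ TPConn G (S.erase r) u v) ∨
      (∃ y, TPConn G (S.erase r) u y ∧ G.Adj y r) := by
    intro v hv
    induction hv with
    | refl => exact Or.inl ⟨Finset.ne_of_mem_erase hu, Relation.ReflTransGen.refl⟩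
    | @tail b c hub hbc ih =>
        rcases ih with ⟨hbr, hb'⟩ | hclaim
        · by_cases hcr : c = r
          · exact Or.inr ⟨b, hb', hcr ▸ hbc.1⟩
          · exact Or.inl ⟨hcr, hb'.tail ⟨hbc.1, Finset.mem_erase.2 ⟨hbr, hbc.2.1⟩,
              Finset.mem_erase.2 ⟨hcr, hbc.2.2⟩⟩⟩
        · exact Or.inr hclaim
  rcases key r h with ⟨hrr, _⟩ | hclaim
  · exact absurd rfl hrr
  · exact hclaim

theorem tp_main (hT : G.IsTree) (t : ℝ) (ht : 1 ≤ t) :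
    ∀ m : ℕ, ∀ S : Finset V, S.card ≤ m → ∀ r, r ∈ S →
    (∀ u ∈ S, ∀ v ∈ S, TPConn G S u v) →
    (∀ u ∈ S, ∀ w, w ∉ S → G.Adj u w → u = r) →
    ∃ (M O : Finset V) (P : Finset (Finset V)),
      M ⊆ S ∧ O ⊆ S ∧ Disjoint M O ∧ (r ∈ M ∨ r ∈ O) ∧
      ((O.card : ℝ) ≤ t) ∧
      (∀ p ∈ P, (p.card : ℝ) ≤ t) ∧
      (∀ p ∈ P, p ⊆ S ∧ Disjoint p M ∧ Disjoint p O) ∧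
      (∀ p ∈ P, ∀ q ∈ P, p ≠ q → Disjoint p q) ∧
      (∀ x ∈ S, x ∉ M → x ∈ O ∨ ∃ p ∈ P, x ∈ p) ∧
      (∀ u v, G.Adj u v → u ∈ S → v ∈ S → u ∉ M → v ∉ M →
        (u ∈ O ∧ v ∈ O) ∨ ∃ p ∈ P, u ∈ p ∧ v ∈ p) ∧
      (M ≠ ∅ → (M.card : ℝ) * t < S.card - O.card) := by
  intro m
  induction m with
  | zero =>
      intro S hS r hr
      have := Finset.card_pos.2 ⟨r, hr⟩
      omega
  | succ m ih =>
      intro S hS r hr hconn hbnd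
      set s' := S.erase r with hs'
      set comp : V → Finset V := fun u => s'.filter (TPConn G s' u) with hcompdef
      set comps : Finset (Finset V) := s'.image comp with hcompsdef
      have hrs' : r ∉ s' := Finset.notMem_erase r S
      have hs'S : s' ⊆ S := Finset.erase_subset r S
      have hs'card : s'.card = S.card - 1 := Finset.card_erase_of_mem hr
      have hcomp_sub : ∀ u, comp u ⊆ s' := fun u => Finset.filter_subset _ _
      have hmem_comp : ∀ u ∈ s', u ∈ comp u := by
        intro u hu; simp [hcompdef, Finset.mem_filter, hu, Relation.ReflTransGen.refl]
        exact Relation.ReflTransGen.refl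
      have hcomp_conn : ∀ u v, v ∈ comp u → TPConn G s' u v := by
        intro u v hv; exact (Finset.mem_filter.1 hv).2
      have hcomp_eq : ∀ u v, v ∈ comp u → comp v = comp u := by
        intro u v hv
        have huv := hcomp_conn u v hv
        ext z
        simp only [hcompdef, Finset.mem_filter, and_congr_right_iff]
        intro _
        exact ⟨fun h => huv.trans h, fun h => huv.symm.trans h⟩
      have hmemcomps : ∀ C ∈ comps, ∃ u ∈ s', C = comp u := by
        intro C hC
        obtain ⟨u, hu, h⟩ := Finset.mem_image.1 hC
        exact ⟨u, hu, h.symm⟩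
      have hC_sub : ∀ C ∈ comps, C ⊆ s' := by
        intro C hC; obtain ⟨u, _, rfl⟩ := hmemcomps C hC; exact hcomp_sub u
      have hcomps_disj : ∀ C ∈ comps, ∀ D ∈ comps, C ≠ D → Disjoint C D := by
        intro C hC D hD hne
        obtain ⟨u, hu, rfl⟩ := hmemcomps C hC
        obtain ⟨v, hv, rfl⟩ := hmemcomps D hD
        rw [Finset.disjoint_left]
        intro x hxu hxv
        exact hne ((hcomp_eq u x hxu).symm.trans (hcomp_eq v x hxv))
      have hdisjX : ∀ C ∈ comps, ∀ D ∈ comps, C ≠ D → ∀ A B : Finset V,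
          A ⊆ C → B ⊆ D → Disjoint A B := by
        intro C hC D hD hne A B hA hB
        exact (hcomps_disj C hC D hD hne).mono hA hB
      have hadj_comp : ∀ u ∈ s', ∀ v ∈ s', G.Adj u v → v ∈ comp u := by
        intro u hu v hv huv
        exact Finset.mem_filter.2 ⟨hv, Relation.ReflTransGen.single ⟨huv, hu, hv⟩⟩
      have hcompmem : ∀ x ∈ s', comp x ∈ comps := by
        intro x hx; exact Finset.mem_image_of_mem comp hx
      -- roots of components
      have hroot : ∀ C, ∃ y, C ∈ comps →
          y ∈ C ∧ G.Adj r y ∧ (∀ z ∈ C, G.Adj r z → z = y) := by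
        intro C
        by_cases hC : C ∈ comps
        · obtain ⟨u, hu, rfl⟩ := hmemcomps C hC
          obtain ⟨y, hy1, hy2⟩ := tp_first_hit (G := G) (hs' ▸ hu) (hconn u (hs'S hu) r hr)
          have hys' : y ∈ s' := hy1.mem_right hu
          have hyC : y ∈ comp u := Finset.mem_filter.2 ⟨hys', hy1⟩
          refine ⟨y, fun _ => ⟨hyC, hy2.symm, ?_⟩⟩
          intro z hz hrz
          by_contra hzy
          have hzc := hcomp_conn u z hz
          have hyc := hcomp_conn u y hyC
          exact tp_unique_nbr hT hrs' hrz hy2.symm hzy (hzc.symm.trans hyc)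
        · exact ⟨r, fun h => absurd h hC⟩
      choose rt hrt using hroot
      -- apply induction hypothesis to every component
      have hdata : ∀ C, ∃ (MO : Finset V × Finset V × Finset (Finset V)), C ∈ comps →
          MO.1 ⊆ C ∧ MO.2.1 ⊆ C ∧ Disjoint MO.1 MO.2.1 ∧ (rt C ∈ MO.1 ∨ rt C ∈ MO.2.1) ∧
          ((MO.2.1.card : ℝ) ≤ t) ∧
          (∀ p ∈ MO.2.2, (p.card : ℝ) ≤ t) ∧
          (∀ p ∈ MO.2.2, p ⊆ C ∧ Disjoint p MO.1 ∧ Disjoint p MO.2.1) ∧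
          (∀ p ∈ MO.2.2, ∀ q ∈ MO.2.2, p ≠ q → Disjoint p q) ∧
          (∀ x ∈ C, x ∉ MO.1 → x ∈ MO.2.1 ∨ ∃ p ∈ MO.2.2, x ∈ p) ∧
          (∀ u v, G.Adj u v → u ∈ C → v ∈ C → u ∉ MO.1 → v ∉ MO.1 →
            (u ∈ MO.2.1 ∧ v ∈ MO.2.1) ∨ ∃ p ∈ MO.2.2, u ∈ p ∧ v ∈ p) ∧
          (MO.1 ≠ ∅ → (MO.1.card : ℝ) * t < C.card - MO.2.1.card) := by
        intro C
        by_cases hC : C ∈ comps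
        · obtain ⟨hrt1, hrt2, hrt3⟩ := hrt C hC
          have hCcard : C.card ≤ m := by
            have h1 : C.card ≤ s'.card := Finset.card_le_card (hC_sub C hC)
            omega
          have hCconn : ∀ u ∈ C, ∀ v ∈ C, TPConn G C u v := by
            intro u hu v hv
            obtain ⟨w, hw, rfl⟩ := hmemcomps C hC
            have h1 : TPConn G s' u v := (hcomp_conn w u hu).symm.trans (hcomp_conn w v hv)
            have h2 := h1.self_comp
            rwa [show s'.filter (TPConn G s' u) = comp u from rfl, hcomp_eq w u hu] at h2
          have hCbnd : ∀ u ∈ C, ∀ w, w ∉ C → G.Adj u w → u = rt C := by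
            intro u hu w hw huw
            by_cases hwr : w = r
            · exact hrt3 u hu (hwr ▸ huw.symm)
            · by_cases hwS : w ∈ S
              · have hws' : w ∈ s' := Finset.mem_erase.2 ⟨hwr, hwS⟩
                obtain ⟨z, hz, rfl⟩ := hmemcomps C hC
                have : w ∈ comp u := hadj_comp u (hC_sub _ hC hu) w hws' huw
                rw [hcomp_eq z u hu] at this
                exact absurd this hw
              · have := hbnd u (hs'S (hC_sub C hC hu)) w hwS huw
                exact absurd (this ▸ (hC_sub C hC hu)) hrs'
          obtain ⟨M, O, P, h⟩ := ih C hCcard (rt C) hrt1 hCconn hCbnd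
          exact ⟨(M, O, P), fun _ => h⟩
        · exact ⟨(∅, ∅, ∅), fun h => absurd h hC⟩
      choose MO hIH using hdata
      set MC : Finset V → Finset V := fun C => (MO C).1 with hMCdef
      set OC : Finset V → Finset V := fun C => (MO C).2.1 with hOCdef
      set PC : Finset V → Finset (Finset V) := fun C => (MO C).2.2 with hPCdef
      -- accessors
      have A1 : ∀ C ∈ comps, MC C ⊆ C := fun C hC => (hIH C hC).1
      have A2 : ∀ C ∈ comps, OC C ⊆ C := fun C hC => (hIH C hC).2.1
      have A3 : ∀ C ∈ comps, Disjoint (MC C) (OC C) := fun C hC => (hIH C hC).2.2.1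
      have A4 : ∀ C ∈ comps, rt C ∈ MC C ∨ rt C ∈ OC C := fun C hC => (hIH C hC).2.2.2.1
      have A5 : ∀ C ∈ comps, ((OC C).card : ℝ) ≤ t := fun C hC => (hIH C hC).2.2.2.2.1
      have A6 : ∀ C ∈ comps, ∀ p ∈ PC C, ((p.card : ℝ) ≤ t) :=
        fun C hC => (hIH C hC).2.2.2.2.2.1
      have A7 : ∀ C ∈ comps, ∀ p ∈ PC C, p ⊆ C ∧ Disjoint p (MC C) ∧ Disjoint p (OC C) :=
        fun C hC => (hIH C hC).2.2.2.2.2.2.1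
      have A8 : ∀ C ∈ comps, ∀ p ∈ PC C, ∀ q ∈ PC C, p ≠ q → Disjoint p q :=
        fun C hC => (hIH C hC).2.2.2.2.2.2.2.1
      have A9 : ∀ C ∈ comps, ∀ x ∈ C, x ∉ MC C → x ∈ OC C ∨ ∃ p ∈ PC C, x ∈ p :=
        fun C hC => (hIH C hC).2.2.2.2.2.2.2.2.1
      have A10 : ∀ C ∈ comps, ∀ u v, G.Adj u v → u ∈ C → v ∈ C → u ∉ MC C → v ∉ MC C →
          (u ∈ OC C ∧ v ∈ OC C) ∨ ∃ p ∈ PC C, u ∈ p ∧ v ∈ p :=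
        fun C hC => (hIH C hC).2.2.2.2.2.2.2.2.2.1
      have A11 : ∀ C ∈ comps, MC C ≠ ∅ → ((MC C).card : ℝ) * t < C.card - (OC C).card :=
        fun C hC => (hIH C hC).2.2.2.2.2.2.2.2.2.2
      -- big unions
      set Mu : Finset V := comps.biUnion MC with hMudef
      set Ou : Finset V := comps.biUnion OC with hOudef
      have hMuS : Mu ⊆ s' := by
        intro x hx
        obtain ⟨C, hC, hxC⟩ := Finset.mem_biUnion.1 hx
        exact hC_sub C hC (A1 C hC hxC)
      have hOuS : Ou ⊆ s' := by
        intro x hx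
        obtain ⟨C, hC, hxC⟩ := Finset.mem_biUnion.1 hx
        exact hC_sub C hC (A2 C hC hxC)
      have hrMu : r ∉ Mu := fun h => hrs' (hMuS h)
      have hrOu : r ∉ Ou := fun h => hrs' (hOuS h)
      have hs'union : s' = comps.biUnion id := by
        ext x
        simp only [Finset.mem_biUnion, id]
        constructor
        · intro hx; exact ⟨comp x, hcompmem x hx, hmem_comp x hx⟩
        · rintro ⟨C, hC, hxC⟩; exact hC_sub C hC hxC
      have hs'sum : (s'.card : ℝ) = ∑ C ∈ comps, (C.card : ℝ) := by
        have hcb := Finset.card_biUnion (s := comps) (t := id)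
          (fun C hC D hD h => hcomps_disj C hC D hD h)
        rw [hs'union, hcb]
        push_cast; rfl
      have hMusum : (Mu.card : ℝ) = ∑ C ∈ comps, ((MC C).card : ℝ) := by
        rw [hMudef, Finset.card_biUnion
          (fun C hC D hD h => hdisjX C hC D hD h _ _ (A1 C hC) (A1 D hD))]
        push_cast; rfl
      have hOusum : (Ou.card : ℝ) = ∑ C ∈ comps, ((OC C).card : ℝ) := by
        rw [hOudef, Finset.card_biUnion
          (fun C hC D hD h => hdisjX C hC D hD h _ _ (A2 C hC) (A2 D hD))]
        push_cast; rfl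
      have hScard : (S.card : ℝ) = 1 + ∑ C ∈ comps, (C.card : ℝ) := by
        have h1 : 1 ≤ S.card := Finset.card_pos.2 ⟨r, hr⟩
        rw [← hs'sum]
        rw [hs'card]
        push_cast [Nat.cast_sub h1]
        ring
      have hsumle : ∑ C ∈ comps, ((MC C).card : ℝ) * t ≤
          ∑ C ∈ comps, ((C.card : ℝ) - (OC C).card) := by
        apply Finset.sum_le_sum
        intro C hC
        by_cases hM : MC C = ∅
        · simp only [hM, Finset.card_empty, Nat.cast_zero, zero_mul]
          have := Finset.card_le_card (A2 C hC)
          have h2 : ((OC C).card : ℝ) ≤ C.card := by exact_mod_cast this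
          linarith
        · exact le_of_lt (A11 C hC hM)
      set b : Finset V := insert r Ou with hbdef
      have hbcard : (b.card : ℝ) = 1 + Ou.card := by
        rw [hbdef, Finset.card_insert_of_notMem hrOu]; push_cast; ring
      -- a couple of generic disjointness helpers
      have hdisjMu : ∀ A : Finset V, (∀ C ∈ comps, Disjoint A (MC C)) → Disjoint A Mu := by
        intro A hA
        rw [Finset.disjoint_left]
        intro x hxA hxM
        obtain ⟨C, hC, hxC⟩ := Finset.mem_biUnion.1 hxM
        exact (Finset.disjoint_left.1 (hA C hC)) hxA hxC
      have hdisjOu : ∀ A : Finset V, (∀ C ∈ comps, Disjoint A (OC C)) → Disjoint A Ou := by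
        intro A hA
        rw [Finset.disjoint_left]
        intro x hxA hxO
        obtain ⟨C, hC, hxC⟩ := Finset.mem_biUnion.1 hxO
        exact (Finset.disjoint_left.1 (hA C hC)) hxA hxC
      set P1 : Finset (Finset V) := comps.biUnion PC with hP1def
      have hP1 : ∀ p ∈ P1, ∃ C ∈ comps, p ∈ PC C := fun p hp => Finset.mem_biUnion.1 hp
      -- properties of P1 elements
      have hP1card : ∀ p ∈ P1, (p.card : ℝ) ≤ t := by
        intro p hp; obtain ⟨C, hC, hpC⟩ := hP1 p hp; exact A6 C hC p hpC
      have hP1sub : ∀ p ∈ P1, p ⊆ s' := by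
        intro p hp; obtain ⟨C, hC, hpC⟩ := hP1 p hp
        exact (A7 C hC p hpC).1.trans (hC_sub C hC)
      have hP1Mu : ∀ p ∈ P1, Disjoint p Mu := by
        intro p hp
        obtain ⟨C, hC, hpC⟩ := hP1 p hp
        apply hdisjMu
        intro D hD
        by_cases hCD : C = D
        · exact hCD ▸ (A7 C hC p hpC).2.1
        · exact hdisjX C hC D hD hCD _ _ (A7 C hC p hpC).1 (A1 D hD)
      have hP1Ou : ∀ p ∈ P1, Disjoint p Ou := by
        intro p hp
        obtain ⟨C, hC, hpC⟩ := hP1 p hp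
        apply hdisjOu
        intro D hD
        by_cases hCD : C = D
        · exact hCD ▸ (A7 C hC p hpC).2.2
        · exact hdisjX C hC D hD hCD _ _ (A7 C hC p hpC).1 (A2 D hD)
      have hP1pair : ∀ p ∈ P1, ∀ q ∈ P1, p ≠ q → Disjoint p q := by
        intro p hp q hq hne
        obtain ⟨C, hC, hpC⟩ := hP1 p hp
        obtain ⟨D, hD, hqD⟩ := hP1 q hq
        by_cases hCD : C = D
        · exact A8 C hC p hpC q (hCD ▸ hqD) hne
        · exact hdisjX C hC D hD hCD _ _ (A7 C hC p hpC).1 (A7 D hD q hqD).1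
      by_cases hb : (b.card : ℝ) ≤ t
      · -- open case : r's bag still fits
        refine ⟨Mu, b, P1, hMuS.trans hs'S, ?_, ?_, Or.inr (Finset.mem_insert_self r Ou),
          hb, hP1card, ?_, hP1pair, ?_, ?_, ?_⟩
        · -- b ⊆ S
          intro x hx
          rcases Finset.mem_insert.1 hx with rfl | hx
          · exact hr
          · exact hs'S (hOuS hx)
        · -- Disjoint Mu b
          rw [Finset.disjoint_right]
          intro x hxb hxM
          rcases Finset.mem_insert.1 hxb with rfl | hxO
          · exact hrMu hxM
          · obtain ⟨C, hC, hxC⟩ := Finset.mem_biUnion.1 hxM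
            have := hdisjOu (MC C) (fun D hD => by
              by_cases hCD : C = D
              · exact hCD ▸ A3 C hC
              · exact hdisjX C hC D hD hCD _ _ (A1 C hC) (A2 D hD))
            exact (Finset.disjoint_left.1 this) hxC hxO
        · -- P1 elements subsets/disjointness
          intro p hp
          refine ⟨(hP1sub p hp).trans hs'S, hP1Mu p hp, ?_⟩
          rw [Finset.disjoint_right]
          intro x hxb hxp
          rcases Finset.mem_insert.1 hxb with rfl | hxO
          · exact hrs' (hP1sub p hp hxp)
          · exact (Finset.disjoint_left.1 (hP1Ou p hp)) hxp hxO
        · -- coverage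
          intro x hxS hxM
          by_cases hxr : x = r
          · exact Or.inl (hxr ▸ Finset.mem_insert_self r Ou)
          · have hxs' : x ∈ s' := Finset.mem_erase.2 ⟨hxr, hxS⟩
            have hC := hcompmem x hxs'
            have hxMC : x ∉ MC (comp x) := fun h =>
              hxM (Finset.mem_biUnion.2 ⟨comp x, hC, h⟩)
            rcases A9 (comp x) hC x (hmem_comp x hxs') hxMC with h | ⟨p, hp, hxp⟩
            · exact Or.inl (Finset.mem_insert_of_mem (Finset.mem_biUnion.2 ⟨comp x, hC, h⟩))
            · exact Or.inr ⟨p, Finset.mem_biUnion.2 ⟨comp x, hC, hp⟩, hxp⟩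
        · -- no cross edges
          intro u v huv huS hvS huM hvM
          by_cases hur : u = r
          · subst hur
            have hvr : v ≠ u := huv.ne'
            have hvs' : v ∈ s' := Finset.mem_erase.2 ⟨hvr, hvS⟩
            have hCv := hcompmem v hvs'
            have hvrt : v = rt (comp v) :=
              (hrt (comp v) hCv).2.2 v (hmem_comp v hvs') huv
            have hvO : v ∈ OC (comp v) := by
              rcases A4 (comp v) hCv with h | h
              · rw [← hvrt] at h
                exact absurd (Finset.mem_biUnion.2 ⟨comp v, hCv, h⟩) hvM
              · rwa [← hvrt] at h
            exact Or.inl ⟨Finset.mem_insert_self _ _,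
              Finset.mem_insert_of_mem (Finset.mem_biUnion.2 ⟨comp v, hCv, hvO⟩)⟩
          · by_cases hvr : v = r
            · subst hvr
              have hus' : u ∈ s' := Finset.mem_erase.2 ⟨hur, huS⟩
              have hCu := hcompmem u hus'
              have hurt : u = rt (comp u) :=
                (hrt (comp u) hCu).2.2 u (hmem_comp u hus') huv.symm
              have huO : u ∈ OC (comp u) := by
                rcases A4 (comp u) hCu with h | h
                · rw [← hurt] at h
                  exact absurd (Finset.mem_biUnion.2 ⟨comp u, hCu, h⟩) huM
                · rwa [← hurt] at h
              exact Or.inl ⟨Finset.mem_insert_of_mem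
                (Finset.mem_biUnion.2 ⟨comp u, hCu, huO⟩), Finset.mem_insert_self _ _⟩
            · have hus' : u ∈ s' := Finset.mem_erase.2 ⟨hur, huS⟩
              have hvs' : v ∈ s' := Finset.mem_erase.2 ⟨hvr, hvS⟩
              have hCu := hcompmem u hus'
              have hvC : v ∈ comp u := hadj_comp u hus' v hvs' huv
              have huMC : u ∉ MC (comp u) := fun h =>
                huM (Finset.mem_biUnion.2 ⟨comp u, hCu, h⟩)
              have hvMC : v ∉ MC (comp u) := fun h =>
                hvM (Finset.mem_biUnion.2 ⟨comp u, hCu, h⟩)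
              rcases A10 (comp u) hCu u v huv (hmem_comp u hus') hvC huMC hvMC with
                ⟨h1, h2⟩ | ⟨p, hp, h1, h2⟩
              · exact Or.inl ⟨Finset.mem_insert_of_mem (Finset.mem_biUnion.2 ⟨_, hCu, h1⟩),
                  Finset.mem_insert_of_mem (Finset.mem_biUnion.2 ⟨_, hCu, h2⟩)⟩
              · exact Or.inr ⟨p, Finset.mem_biUnion.2 ⟨_, hCu, hp⟩, h1, h2⟩
        · -- counting
          intro hMne
          obtain ⟨x, hx⟩ := Finset.nonempty_iff_ne_empty.2 hMne
          obtain ⟨C₀, hC₀, hxC₀⟩ := Finset.mem_biUnion.1 hx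
          have hMC₀ : MC C₀ ≠ ∅ := fun h => by simp [h] at hxC₀
          have hstrict : ∑ C ∈ comps, ((MC C).card : ℝ) * t <
              ∑ C ∈ comps, ((C.card : ℝ) - (OC C).card) := by
            apply Finset.sum_lt_sum
            · intro C hC
              by_cases hM : MC C = ∅
              · simp only [hM, Finset.card_empty, Nat.cast_zero, zero_mul]
                have := Finset.card_le_card (A2 C hC)
                have h2 : ((OC C).card : ℝ) ≤ C.card := by exact_mod_cast this
                linarith
              · exact le_of_lt (A11 C hC hM)
            · exact ⟨C₀, hC₀, A11 C₀ hC₀ hMC₀⟩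
          have h1 : (Mu.card : ℝ) * t = ∑ C ∈ comps, ((MC C).card : ℝ) * t := by
            rw [hMusum, Finset.sum_mul]
          rw [h1, hScard, hbcard, hOusum]
          calc ∑ C ∈ comps, ((MC C).card : ℝ) * t
              < ∑ C ∈ comps, ((C.card : ℝ) - (OC C).card) := hstrict
            _ = 1 + ∑ C ∈ comps, (C.card : ℝ) -
                (1 + ∑ C ∈ comps, ((OC C).card : ℝ)) := by
                rw [Finset.sum_sub_distrib]; ring
      · -- closed case : r's bag overflows, close everything
        push_neg at hb
        set P2 : Finset (Finset V) := (comps.image OC).filter (· ≠ ∅) with hP2def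
        have hP2 : ∀ p ∈ P2, ∃ C ∈ comps, p = OC C ∧ p ≠ ∅ := by
          intro p hp
          obtain ⟨hp1, hp2⟩ := Finset.mem_filter.1 hp
          obtain ⟨C, hC, hpC⟩ := Finset.mem_image.1 hp1
          exact ⟨C, hC, hpC.symm, hp2⟩
        have hP2' : ∀ C ∈ comps, OC C ≠ ∅ → OC C ∈ P2 := by
          intro C hC hne
          exact Finset.mem_filter.2 ⟨Finset.mem_image_of_mem OC hC, hne⟩
        have hP2sub : ∀ p ∈ P2, p ⊆ s' := by
          intro p hp
          obtain ⟨C, hC, rfl, _⟩ := hP2 p hp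
          exact (A2 C hC).trans (hC_sub C hC)
        have hP2Mu : ∀ p ∈ P2, Disjoint p Mu := by
          intro p hp
          obtain ⟨C, hC, rfl, _⟩ := hP2 p hp
          apply hdisjMu
          intro D hD
          by_cases hCD : C = D
          · exact hCD ▸ (A3 C hC).symm
          · exact hdisjX C hC D hD hCD _ _ (A2 C hC) (A1 D hD)
        have hMS : insert r Mu ⊆ S := Finset.insert_subset hr (hMuS.trans hs'S)
        refine ⟨insert r Mu, ∅, P1 ∪ P2, hMS, Finset.empty_subset S,
          Finset.disjoint_empty_right _, Or.inl (Finset.mem_insert_self r Mu),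
          by simp; linarith, ?_, ?_, ?_, ?_, ?_, ?_⟩
        · -- part sizes
          intro p hp
          rcases Finset.mem_union.1 hp with hp | hp
          · exact hP1card p hp
          · obtain ⟨C, hC, rfl, _⟩ := hP2 p hp
            exact A5 C hC
        · -- part subsets / disjointness from M and O
          intro p hp
          have hps' : p ⊆ s' := by
            rcases Finset.mem_union.1 hp with hp | hp
            · exact hP1sub p hp
            · exact hP2sub p hp
          have hpMu : Disjoint p Mu := by
            rcases Finset.mem_union.1 hp with hp | hp
            · exact hP1Mu p hp
            · exact hP2Mu p hp
          refine ⟨hps'.trans hs'S, ?_, Finset.disjoint_empty_right _⟩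
          rw [Finset.disjoint_right]
          intro x hxM hxp
          rcases Finset.mem_insert.1 hxM with rfl | hxM
          · exact hrs' (hps' hxp)
          · exact (Finset.disjoint_left.1 hpMu) hxp hxM
        · -- pairwise disjoint parts
          intro p hp q hq hne
          rcases Finset.mem_union.1 hp with hp | hp <;>
            rcases Finset.mem_union.1 hq with hq | hq
          · exact hP1pair p hp q hq hne
          · obtain ⟨C, hC, hpC⟩ := hP1 p hp
            obtain ⟨D, hD, rfl, _⟩ := hP2 q hq
            by_cases hCD : C = D
            · exact hCD ▸ (A7 C hC p hpC).2.2
            · exact hdisjX C hC D hD hCD _ _ (A7 C hC p hpC).1 (A2 D hD)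
          · obtain ⟨C, hC, rfl, _⟩ := hP2 p hp
            obtain ⟨D, hD, hqD⟩ := hP1 q hq
            by_cases hCD : C = D
            · exact (hCD ▸ (A7 D hD q hqD).2.2).symm
            · exact hdisjX C hC D hD hCD _ _ (A2 C hC) (A7 D hD q hqD).1
          · obtain ⟨C, hC, rfl, _⟩ := hP2 p hp
            obtain ⟨D, hD, hqD, _⟩ := hP2 q hq
            by_cases hCD : C = D
            · subst hCD; exact absurd hqD.symm hne
            · exact hdisjX C hC D hD hCD _ _ (A2 C hC) (by rw [hqD]; exact A2 D hD)
        · -- coverage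
          intro x hxS hxM
          have hxr : x ≠ r := fun h => hxM (h ▸ Finset.mem_insert_self r Mu)
          have hxMu : x ∉ Mu := fun h => hxM (Finset.mem_insert_of_mem h)
          have hxs' : x ∈ s' := Finset.mem_erase.2 ⟨hxr, hxS⟩
          have hC := hcompmem x hxs'
          have hxMC : x ∉ MC (comp x) := fun h =>
            hxMu (Finset.mem_biUnion.2 ⟨comp x, hC, h⟩)
          rcases A9 (comp x) hC x (hmem_comp x hxs') hxMC with h | ⟨p, hp, hxp⟩
          · refine Or.inr ⟨OC (comp x), Finset.mem_union_right _ ?_, h⟩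
            exact hP2' (comp x) hC (Finset.ne_empty_of_mem h)
          · exact Or.inr ⟨p, Finset.mem_union_left _ (Finset.mem_biUnion.2 ⟨_, hC, hp⟩), hxp⟩
        · -- no cross edges
          intro u v huv huS hvS huM hvM
          have hur : u ≠ r := fun h => huM (h ▸ Finset.mem_insert_self r Mu)
          have hvr : v ≠ r := fun h => hvM (h ▸ Finset.mem_insert_self r Mu)
          have hus' : u ∈ s' := Finset.mem_erase.2 ⟨hur, huS⟩
          have hvs' : v ∈ s' := Finset.mem_erase.2 ⟨hvr, hvS⟩
          have hCu := hcompmem u hus'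
          have hvC : v ∈ comp u := hadj_comp u hus' v hvs' huv
          have huMC : u ∉ MC (comp u) := fun h =>
            huM (Finset.mem_insert_of_mem (Finset.mem_biUnion.2 ⟨comp u, hCu, h⟩))
          have hvMC : v ∉ MC (comp u) := fun h =>
            hvM (Finset.mem_insert_of_mem (Finset.mem_biUnion.2 ⟨comp u, hCu, h⟩))
          rcases A10 (comp u) hCu u v huv (hmem_comp u hus') hvC huMC hvMC with
            ⟨h1, h2⟩ | ⟨p, hp, h1, h2⟩
          · refine Or.inr ⟨OC (comp u), Finset.mem_union_right _ ?_, h1, h2⟩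
            exact hP2' (comp u) hCu (Finset.ne_empty_of_mem h1)
          · exact Or.inr ⟨p, Finset.mem_union_left _
              (Finset.mem_biUnion.2 ⟨_, hCu, hp⟩), h1, h2⟩
        · -- counting
          intro _
          have hcard : ((insert r Mu).card : ℝ) = 1 + Mu.card := by
            rw [Finset.card_insert_of_notMem hrMu]; push_cast; ring
          rw [hcard, hScard]
          have hbO : t < 1 + (Ou.card : ℝ) := by rw [← hbcard]; exact hb
          have hMut : (Mu.card : ℝ) * t = ∑ C ∈ comps, ((MC C).card : ℝ) * t := by
            rw [hMusum, Finset.sum_mul]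
          have h2 : ∑ C ∈ comps, ((C.card : ℝ) - (OC C).card) =
              ∑ C ∈ comps, (C.card : ℝ) - ∑ C ∈ comps, ((OC C).card : ℝ) := by
            rw [Finset.sum_sub_distrib]
          simp only [Finset.card_empty, Nat.cast_zero, sub_zero]
          have := hsumle
          rw [h2] at this
          rw [hOusum] at hbO
          have hMuup : (Mu.card : ℝ) * t ≤
              ∑ C ∈ comps, (C.card : ℝ) - ∑ C ∈ comps, ((OC C).card : ℝ) := by
            rw [hMut]; exact this
          nlinarith [hMuup, hbO]

lemma tp_walk_conn [Fintype V] {u v : V} (p : G.Walk u v) : TPConn G Finset.univ u v := by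
  induction p with
  | nil => exact Relation.ReflTransGen.refl
  | cons h _ ih =>
      exact Relation.ReflTransGen.head ⟨h, Finset.mem_univ _, Finset.mem_univ _⟩ ih

theorem tree_partition {V : Type} [Fintype V] (G : SimpleGraph V) (root : V)
    (hT : G.IsTree) (n k : ℕ) (hn : n = Fintype.card V)
    (hk2 : 2 ≤ k) (hkn : k ≤ n) :
    ∃ M : Finset V, M.card ≤ 3 * k - 5 ∧
      ∀ c : (G.induce ((↑M : Set V)ᶜ)).ConnectedComponent,
        (Nat.card c.supp : ℝ) ≤ (n : ℝ) / (k : ℝ) := by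
  classical
  set t : ℝ := (n : ℝ) / k with htdef
  have hk0 : (0 : ℝ) < k := by positivity
  have ht : 1 ≤ t := by
    rw [htdef, le_div_iff₀ hk0]
    have : (k : ℝ) ≤ n := by exact_mod_cast hkn
    linarith
  have hconn : ∀ u ∈ (Finset.univ : Finset V), ∀ v ∈ (Finset.univ : Finset V),
      TPConn G Finset.univ u v := by
    intro u _ v _
    obtain ⟨p⟩ := (hT.isConnected.preconnected u v : G.Reachable u v)
    exact tp_walk_conn p
  obtain ⟨M, O, P, _, _, _, _, hO, hPcard, hPsub, hPpair, hcover, hnocross, hcount⟩ :=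
    tp_main hT t ht (Finset.univ.card) Finset.univ le_rfl root (Finset.mem_univ root)
      hconn (fun u _ w hw _ => absurd (Finset.mem_univ w) hw)
  have hnV : (Finset.univ : Finset V).card = n := by rw [hn, Finset.card_univ]
  have hn0 : (0 : ℝ) < n := by
    have : 2 ≤ n := le_trans hk2 hkn
    positivity
  refine ⟨M, ?_, ?_⟩
  · -- cardinality bound
    by_cases hM : M = ∅
    · simp [hM]
    · have h1 := hcount hM
      rw [hnV] at h1
      have h2 : (O.card : ℝ) ≥ 0 := by positivity
      have h3 : (M.card : ℝ) * t < n := by linarith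
      have h5 : (M.card : ℝ) < k := by
        by_contra hge
        push_neg at hge
        have h4 : (k : ℝ) * t ≤ (M.card : ℝ) * t := by
          apply mul_le_mul_of_nonneg_right hge
          linarith
        have h6 : (k : ℝ) * t = n := by
          rw [htdef]; field_simp
        linarith
      have h6 : M.card < k := by exact_mod_cast h5
      omega
  · -- component sizes
    intro c
    -- uniqueness of cells
    have huniq : ∀ (x : V) (E E' : Finset V), (E = O ∨ E ∈ P) → (E' = O ∨ E' ∈ P) →
        x ∈ E → x ∈ E' → E = E' := by
      rintro x E E' (rfl | hE) (rfl | hE') hxE hxE'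
      · rfl
      · exact absurd hxE (Finset.disjoint_left.1 (hPsub E' hE').2.2 hxE')
      · exact absurd hxE' (Finset.disjoint_left.1 (hPsub E hE).2.2 hxE)
      · by_contra hne
        exact (Finset.disjoint_left.1 (hPpair E hE E' hE' hne)) hxE hxE'
    obtain ⟨v, hv⟩ := c.exists_rep
    have hvM : ↑v ∉ M := fun h => v.2 (Finset.mem_coe.2 h)
    obtain ⟨D, hD, hvD⟩ : ∃ D, (D = O ∨ D ∈ P) ∧ ↑v ∈ D := by
      rcases hcover ↑v (Finset.mem_univ _) hvM with h | ⟨p, hp, hxp⟩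
      · exact ⟨O, Or.inl rfl, h⟩
      · exact ⟨p, Or.inr hp, hxp⟩
    have hstep : ∀ a b : ((↑M : Set V)ᶜ : Set V), G.Adj ↑a ↑b → (↑b : V) ∈ D → (↑a : V) ∈ D := by
      intro a b hab hbD
      have haM : ↑a ∉ M := fun h => a.2 (Finset.mem_coe.2 h)
      have hbM : ↑b ∉ M := fun h => b.2 (Finset.mem_coe.2 h)
      rcases hnocross ↑a ↑b hab (Finset.mem_univ _) (Finset.mem_univ _) haM hbM with
        ⟨h1, h2⟩ | ⟨p, hp, h1, h2⟩
      · have he := huniq ↑b O D (Or.inl rfl) hD h2 hbD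
        rwa [he] at h1
      · have he := huniq ↑b p D (Or.inr hp) hD h2 hbD
        rwa [he] at h1
    have hwalk : ∀ (a b : ((↑M : Set V)ᶜ : Set V)),
        (G.induce ((↑M : Set V)ᶜ)).Walk a b → (↑b : V) ∈ D → (↑a : V) ∈ D := by
      intro a b p
      induction p with
      | nil => exact id
      | cons h q ih =>
          intro hbD
          exact hstep _ _ ((SimpleGraph.comap_adj).1 h) (ih hbD)
    have hsupp : ∀ x : c.supp, (↑(↑x : ((↑M : Set V)ᶜ : Set V)) : V) ∈ D := by
      rintro ⟨x, hx⟩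
      rw [SimpleGraph.ConnectedComponent.mem_supp_iff, ← hv] at hx
      obtain ⟨p⟩ := (SimpleGraph.ConnectedComponent.eq.1 hx : _)
      exact hwalk x v p hvD
    have hinj : Function.Injective (fun x : c.supp => (⟨↑↑x, hsupp x⟩ : {y // y ∈ D})) := by
      intro x y hxy
      simp only [Subtype.mk.injEq] at hxy
      exact Subtype.ext (Subtype.ext hxy)
    have hle : Nat.card c.supp ≤ Nat.card {y // y ∈ D} :=
      Nat.card_le_card_of_injective _ hinj
    have hDcard : Nat.card {y // y ∈ D} = D.card := Nat.card_eq_finsetCard D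
    have hDt : (D.card : ℝ) ≤ t := by
      rcases hD with rfl | hD
      · exact hO
      · exact hPcard D hD
    have : (Nat.card c.supp : ℝ) ≤ D.card := by
      rw [← hDcard]; exact_mod_cast hle
    calc (Nat.card c.supp : ℝ) ≤ D.card := this
      _ ≤ t := hDt
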